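/- arXiv:2602.17876 — 3 statements merged into one kernel-verified Lean document; each statement's English description precedes it below -/
import Mathlib

section
/- One-step drift lower bound under a derivative lower bound: there is a universal constant c_dr > 0 such that the following holds. Let d ≥ 3, let f : [-1,1] → [-1,1] be continuously differentiable and non-decreasing with f'(x) ≥ c₀ > 0 for all x ∈ [0,1], let θ, θ* ∈ S^{d-1} with m = ⟨θ, θ*⟩ > 0, and fix η > 0 and σ ∈ [0,1]. With Z, a, ε, r, θ_{1/2} as in the one-step SGD update, E[⟨θ*, θ_{1/2}⟩] − m ≥ c_dr c₀ (η σ² / d) f'(√(1−σ²)) (1 − m²). -/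
open MeasureTheory ProbabilityTheory Real
open scoped RealInnerProductSpace ENNReal NNReal

noncomputable section

/-- Euclidean space `ℝ^d`. -/
abbrev EVec (d : ℕ) : Type := EuclideanSpace ℝ (Fin d)

/-- `ν` is the uniform (rotation-invariant) probability measure on the unit sphere of the
orthogonal complement of `θ`, i.e. on `{a ∈ S^{d-1} : ⟪a, θ⟫ = 0}`. -/
def IsUniformPerpSphere {d : ℕ} (ν : Measure (EVec d)) (θ : EVec d) : Prop :=
  IsProbabilityMeasure ν ∧
    (∀ᵐ x ∂ν, ‖x‖ = 1 ∧ ⟪x, θ⟫ = 0) ∧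
    ∀ R : EVec d ≃ₗᵢ[ℝ] EVec d, R θ = θ → ν.map R = ν

lemma exchange {d : ℕ} (hd : 2 ≤ d) (θ p q : EVec d) (hθ : ‖θ‖ = 1) (hp1 : ‖p‖ = 1)
    (hq1 : ‖q‖ = 1) (hpθ : ⟪p, θ⟫ = 0) (hqθ : ⟪q, θ⟫ = 0) :
    ∃ R : EVec d ≃ₗᵢ[ℝ] EVec d, R θ = θ ∧ R q = p := by
  have hcard : Module.finrank ℝ (EVec d) = Fintype.card (Fin d) := by simp
  set i0 : Fin d := ⟨0, by omega⟩ with hi0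
  set i1 : Fin d := ⟨1, by omega⟩ with hi1
  have h01 : i0 ≠ i1 := by simp [hi0, hi1, Fin.ext_iff]
  have key : ∀ x : EVec d, ‖x‖ = 1 → ⟪x, θ⟫ = 0 →
      ∃ b : OrthonormalBasis (Fin d) ℝ (EVec d), b i0 = θ ∧ b i1 = x := by
    intro x hx1 hxθ
    set v : Fin d → EVec d := fun i => if i = i0 then θ else x with hv
    have hon : Orthonormal ℝ (({i0, i1} : Set (Fin d)).restrict v) := by
      constructor
      · rintro ⟨i, hi⟩
        rcases hi with rfl | rfl <;> simp [v, Set.restrict, h01, h01.symm, hθ, hx1]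
      · rintro ⟨i, hi⟩ ⟨j, hj⟩ hij
        have hij' : i ≠ j := by simpa [Subtype.ext_iff] using hij
        rcases hi with rfl | rfl <;> rcases hj with rfl | rfl <;>
          simp_all [v, Set.restrict, h01, h01.symm, real_inner_comm x θ]
    obtain ⟨b, hb⟩ := hon.exists_orthonormalBasis_extension_of_card_eq hcard
    exact ⟨b, by simpa [v] using hb i0 (by simp), by simpa [v, h01.symm] using hb i1 (by simp)⟩
  obtain ⟨b, hb0, hb1⟩ := key q hq1 hqθ
  obtain ⟨c, hc0, hc1⟩ := key p hp1 hpθ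
  refine ⟨b.repr.trans c.repr.symm, ?_, ?_⟩
  · rw [LinearIsometryEquiv.trans_apply, ← hb0, b.repr_self, c.repr_symm_single, hc0, hb0]
  · rw [LinearIsometryEquiv.trans_apply, ← hb1, b.repr_self, c.repr_symm_single, hc1]

lemma int_bdd {d : ℕ} (ν : Measure (EVec d)) [IsProbabilityMeasure ν]
    (φ : EVec d → ℝ) (hφ : Continuous φ) (C : ℝ) (h : ∀ᵐ z ∂ν, |φ z| ≤ C) :
    Integrable φ ν := by
  refine Integrable.mono' (integrable_const C) hφ.aestronglyMeasurable ?_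
  simpa [Real.norm_eq_abs] using h

lemma map_int {d : ℕ} (ν : Measure (EVec d)) (R : EVec d ≃ₗᵢ[ℝ] EVec d)
    (hR : ν.map R = ν) (φ : EVec d → ℝ) (hφ : Continuous φ) :
    ∫ z, φ z ∂ν = ∫ z, φ (R z) ∂ν := by
  conv_lhs => rw [← hR]
  exact integral_map (R.continuous.measurable.aemeasurable) (hφ.aestronglyMeasurable)

lemma cont_inner_sq {d : ℕ} (w : EVec d) : Continuous fun z : EVec d => ⟪w, z⟫ ^ 2 :=
  (continuous_const.inner continuous_id).pow 2

lemma second_moment {d : ℕ} (hd : 3 ≤ d) (θ : EVec d) (hθ : ‖θ‖ = 1)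
    (ν : Measure (EVec d)) [IsProbabilityMeasure ν]
    (hsupp : ∀ᵐ x ∂ν, ‖x‖ = 1 ∧ ⟪x, θ⟫ = 0)
    (hinv : ∀ R : EVec d ≃ₗᵢ[ℝ] EVec d, R θ = θ → ν.map R = ν)
    (u : EVec d) (hu : ‖u‖ = 1) (huθ : ⟪u, θ⟫ = 0) :
    ∫ z, ⟪u, z⟫ ^ 2 ∂ν = 1 / ((d : ℝ) - 1) := by
  have hd2 : 2 ≤ d := by omega
  have heq : ∀ w : EVec d, ‖w‖ = 1 → ⟪w, θ⟫ = 0 →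
      ∫ z, ⟪w, z⟫ ^ 2 ∂ν = ∫ z, ⟪u, z⟫ ^ 2 ∂ν := by
    intro w hw hwθ
    obtain ⟨R, hRθ, hRu⟩ := exchange hd2 θ w u hθ hw hu hwθ huθ
    have h1 : ∫ z, ⟪w, z⟫ ^ 2 ∂ν = ∫ z, ⟪w, R z⟫ ^ 2 ∂ν :=
      map_int ν R (hinv R hRθ) _ (cont_inner_sq w)
    rw [h1]
    congr 1; ext z
    rw [← hRu, R.inner_map_map]
  set K : Submodule ℝ (EVec d) := (ℝ ∙ θ)ᗮ with hK
  have hθne : θ ≠ 0 := by intro h; rw [h] at hθ; simp at hθ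
  have hrank : Module.finrank ℝ K = d - 1 := by
    have h1 : Module.finrank ℝ (ℝ ∙ θ) + Module.finrank ℝ K = d := by
      rw [hK, Submodule.finrank_add_finrank_orthogonal]
      simp [finrank_euclideanSpace]
    have h2 : Module.finrank ℝ (ℝ ∙ θ) = 1 := finrank_span_singleton hθne
    omega
  set b := stdOrthonormalBasis ℝ K with hb
  have hbi : ∀ i, ‖((b i : K) : EVec d)‖ = 1 ∧ ⟪((b i : K) : EVec d), θ⟫ = 0 := by
    intro i
    constructor
    · rw [Submodule.norm_coe]; exact b.orthonormal.1 i
    · have hmem : ((b i : K) : EVec d) ∈ (ℝ ∙ θ)ᗮ := (b i).2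
      rw [Submodule.mem_orthogonal_singleton_iff_inner_right] at hmem
      rw [real_inner_comm]; exact hmem
  have hint : ∀ w : EVec d, ‖w‖ = 1 → Integrable (fun z => ⟪w, z⟫ ^ 2) ν := by
    intro w hw
    refine int_bdd ν _ (cont_inner_sq w) 1 ?_
    filter_upwards [hsupp] with z hz
    have hb' : |⟪w, z⟫| ≤ 1 := by
      calc |⟪w, z⟫| ≤ ‖w‖ * ‖z‖ := abs_real_inner_le_norm w z
      _ = 1 := by rw [hw, hz.1, mul_one]
    calc |⟪w, z⟫ ^ 2| = |⟪w, z⟫| ^ 2 := by rw [abs_pow]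
    _ ≤ 1 := pow_le_one₀ (abs_nonneg _) hb'
  have hsum : ∫ z, (∑ i, ⟪((b i : K) : EVec d), z⟫ ^ 2) ∂ν = 1 := by
    have hae : ∀ᵐ z ∂ν, (∑ i, ⟪((b i : K) : EVec d), z⟫ ^ 2) = 1 := by
      filter_upwards [hsupp] with z hz
      have hzK : z ∈ K := by
        rw [hK, Submodule.mem_orthogonal_singleton_iff_inner_right, real_inner_comm]
        exact hz.2
      set zK : K := ⟨z, hzK⟩ with hzKdef
      have hpars := b.sum_inner_mul_inner zK zK
      have h2 : ∀ i, (inner ℝ zK (b i) : ℝ) * (inner ℝ (b i) zK : ℝ)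
          = ⟪((b i : K) : EVec d), z⟫ ^ 2 := by
        intro i
        simp only [Submodule.coe_inner]
        rw [real_inner_comm (zK : EVec d), ← pow_two]
      simp only [h2] at hpars
      rw [hpars, Submodule.coe_inner]
      show ⟪z, z⟫ = 1
      rw [real_inner_self_eq_norm_sq, hz.1]; norm_num
    rw [integral_congr_ae hae, integral_const]
    simp
  have hswap : ∫ z, (∑ i, ⟪((b i : K) : EVec d), z⟫ ^ 2) ∂ν
      = ∑ i, ∫ z, ⟪((b i : K) : EVec d), z⟫ ^ 2 ∂ν :=
    integral_finset_sum _ (fun i _ => hint _ (hbi i).1)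
  have hconst : ∀ i, ∫ z, ⟪((b i : K) : EVec d), z⟫ ^ 2 ∂ν = ∫ z, ⟪u, z⟫ ^ 2 ∂ν :=
    fun i => heq _ (hbi i).1 (hbi i).2
  rw [hswap] at hsum
  simp only [hconst, Finset.sum_const, Finset.card_univ, Fintype.card_fin, nsmul_eq_mul] at hsum
  rw [hrank] at hsum
  have hnd : ((d - 1 : ℕ) : ℝ) = (d : ℝ) - 1 := by
    push_cast [Nat.cast_sub (by omega : 1 ≤ d)]; ring
  rw [hnd] at hsum
  have hdpos : (0:ℝ) < (d:ℝ) - 1 := by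
    have : (3:ℝ) ≤ d := by exact_mod_cast hd
    linarith
  rw [eq_div_iff (ne_of_gt hdpos)]
  linarith [hsum]

lemma slope_lb (f f' : ℝ → ℝ)
    (hderiv : ∀ x ∈ Set.Icc (-1:ℝ) 1, HasDerivAt f (f' x) x)
    (c₀ : ℝ) (hc₀f : ∀ x ∈ Set.Icc (0:ℝ) 1, c₀ ≤ f' x) :
    ∀ x y : ℝ, 0 ≤ x → x ≤ y → y ≤ 1 → c₀ * (y - x) ≤ f y - f x := by
  intro x y hx hxy hy1
  have hsub : Set.Icc (0:ℝ) 1 ⊆ Set.Icc (-1:ℝ) 1 :=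
    Set.Icc_subset_Icc (by norm_num) le_rfl
  refine (convex_Icc (0:ℝ) 1).mul_sub_le_image_sub_of_le_deriv ?_ ?_ ?_ x
    ⟨hx, le_trans hxy hy1⟩ y ⟨le_trans hx hxy, hy1⟩ hxy
  · exact fun z hz => ((hderiv z (hsub hz)).continuousAt).continuousWithinAt
  · intro z hz
    rw [interior_Icc] at hz
    exact ((hderiv z (hsub (Set.Ioo_subset_Icc_self hz))).differentiableAt).differentiableWithinAt
  · intro z hz
    rw [interior_Icc] at hz
    rw [(hderiv z (hsub (Set.Ioo_subset_Icc_self hz))).deriv]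
    exact hc₀f z (Set.Ioo_subset_Icc_self hz)

lemma pointwise_ineq (f : ℝ → ℝ) (hmono : MonotoneOn f (Set.Icc (-1:ℝ) 1))
    (c₀ σ sm : ℝ)
    (hslope : ∀ x y, 0 ≤ x → x ≤ y → y ≤ 1 → c₀ * (y - x) ≤ f y - f x)
    (hσ : 0 ≤ σ) (hsm0 : 0 ≤ sm) (t : ℝ)
    (h1 : |sm + σ * t| ≤ 1) (h2 : |sm - σ * t| ≤ 1) :
    c₀ * σ * t ^ 2 ≤ (f (sm + σ * t) - f (sm - σ * t)) * t := by
  have h1' := abs_le.mp h1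
  have h2' := abs_le.mp h2
  have hsm1 : sm ≤ 1 := by nlinarith [h1'.2, h2'.2]
  have hmemsm : sm ∈ Set.Icc (-1:ℝ) 1 := ⟨by linarith, hsm1⟩
  rcases le_or_gt 0 t with ht | ht
  · have hst : 0 ≤ σ * t := mul_nonneg hσ ht
    have hA : c₀ * (σ * t) ≤ f (sm + σ * t) - f sm := by
      have := hslope sm (sm + σ * t) hsm0 (by linarith) h1'.2
      linarith [this]
    have hB : 0 ≤ f sm - f (sm - σ * t) :=
      sub_nonneg.mpr (hmono ⟨h2'.1, by linarith⟩ hmemsm (by linarith))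
    nlinarith [hA, hB, ht]
  · have hst : 0 ≤ σ * (-t) := mul_nonneg hσ (by linarith)
    have hA : c₀ * (σ * (-t)) ≤ f (sm - σ * t) - f sm := by
      have harg : sm + σ * (-t) = sm - σ * t := by ring
      have := hslope sm (sm + σ * (-t)) hsm0 (by linarith) (by rw [harg]; linarith [h2'.2])
      rw [harg] at this
      linarith [this]
    have hB : 0 ≤ f sm - f (sm + σ * t) :=
      sub_nonneg.mpr (hmono ⟨h1'.1, by linarith⟩ hmemsm (by nlinarith))
    nlinarith [hA, hB, ht]

def clamp1 (t : ℝ) : ℝ := max (-1) (min 1 t)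

lemma clamp1_mem (t : ℝ) : clamp1 t ∈ Set.Icc (-1:ℝ) 1 := by
  constructor
  · exact le_max_left _ _
  · exact max_le (by norm_num) (min_le_left _ _)

lemma clamp1_eq {t : ℝ} (h : t ∈ Set.Icc (-1:ℝ) 1) : clamp1 t = t := by
  unfold clamp1
  rw [min_eq_right h.2, max_eq_right h.1]

lemma clamp1_cont : Continuous clamp1 :=
  continuous_const.max (continuous_const.min continuous_id)

set_option maxHeartbeats 2000000 in
/-- One-step drift lower bound under a derivative lower bound: there is a
universal constant `c_dr > 0` such that, for the one-step SGD update with a non-decreasing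
link `f` satisfying `f' ≥ c₀ > 0` on `[0,1]` and `m = ⟪θ, θ*⟫ > 0`,
`E⟪θ*, θ_{1/2}⟫ − m ≥ c_dr c₀ (η σ²/d) f'(√(1−σ²)) (1−m²)`. -/
theorem statement6 :
    ∃ cdr : ℝ, 0 < cdr ∧
      ∀ (d : ℕ), 3 ≤ d →
      ∀ (f f' : ℝ → ℝ),
        (∀ x ∈ Set.Icc (-1 : ℝ) 1, HasDerivAt f (f' x) x) →
        ContinuousOn f' (Set.Icc (-1 : ℝ) 1) →
        (∀ x ∈ Set.Icc (-1 : ℝ) 1, f x ∈ Set.Icc (-1 : ℝ) 1) →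
        MonotoneOn f (Set.Icc (-1 : ℝ) 1) →
        ∀ c₀ : ℝ, 0 < c₀ → (∀ x ∈ Set.Icc (0 : ℝ) 1, c₀ ≤ f' x) →
        ∀ (θ θstar : EVec d), ‖θ‖ = 1 → ‖θstar‖ = 1 →
        ∀ m : ℝ, m = ⟪θ, θstar⟫ → 0 < m →
        ∀ η σ : ℝ, 0 < η → σ ∈ Set.Icc (0 : ℝ) 1 →
        ∀ (Ω : Type) [inst : MeasurableSpace Ω] (μ : Measure Ω),
          IsProbabilityMeasure μ →
          ∀ (Z : Ω → EVec d), Measurable Z →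
            IsUniformPerpSphere (μ.map Z) θ →
          ∀ (noise : Ω → ℝ), Measurable noise → Integrable noise μ →
            (∫ ω, noise ω ∂μ) = 0 → IndepFun noise Z μ →
          ∀ (A : Ω → EVec d),
            (∀ ω, A ω = Real.sqrt (1 - σ ^ 2) • θ + σ • Z ω) →
          ∀ (θhalf : Ω → EVec d),
            (∀ ω, θhalf ω = θ -
              (η * (f ⟪θ, A ω⟫ - (f ⟪θstar, A ω⟫ + noise ω)) * f' ⟪θ, A ω⟫) •
                (A ω - ⟪θ, A ω⟫ • θ)) →
          cdr * c₀ * (η * σ ^ 2 / d) * f' (Real.sqrt (1 - σ ^ 2)) * (1 - m ^ 2) ≤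
            (∫ ω, ⟪θstar, θhalf ω⟫ ∂μ) - m := by
  refine ⟨1/2, by norm_num, ?_⟩
  intro d hd f f' hderiv hf'cont hfmap hfmono c₀ hc₀ hc₀f θ θstar hθ hθstar m hm hm0 η σ hη hσIcc
    Ω inst μ hμ Z hZ hunif noise hnoise_meas hnoise_int hnoise_mean hindep A hA θhalf hθhalf
  obtain ⟨hν_prob, hν_supp, hν_inv⟩ := hunif
  have hd2 : 2 ≤ d := by omega
  obtain ⟨hσ0, hσ1⟩ := hσIcc
  -- basic scalars
  set s : ℝ := Real.sqrt (1 - σ ^ 2) with hs_def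
  have hσsq : (0:ℝ) ≤ 1 - σ ^ 2 := by nlinarith
  have hs0 : 0 ≤ s := Real.sqrt_nonneg _
  have hs2 : s ^ 2 = 1 - σ ^ 2 := Real.sq_sqrt hσsq
  have hs1 : s ≤ 1 := by nlinarith [hs2, hs0]
  have hsIcc : s ∈ Set.Icc (0:ℝ) 1 := ⟨hs0, hs1⟩
  have hm1 : m ≤ 1 := by
    rw [hm]
    calc ⟪θ, θstar⟫ ≤ ‖θ‖ * ‖θstar‖ := real_inner_le_norm θ θstar
    _ = 1 := by rw [hθ, hθstar, mul_one]
  have hm2 : (0:ℝ) ≤ 1 - m ^ 2 := by nlinarith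
  have hfs : c₀ ≤ f' s := hc₀f s hsIcc
  have hfs0 : 0 < f' s := lt_of_lt_of_le hc₀ hfs
  -- the vector v = θ* - m θ
  set v : EVec d := θstar - m • θ with hv_def
  have hθθ : ⟪θ, θ⟫ = 1 := by
    rw [real_inner_self_eq_norm_sq, hθ]; norm_num
  have hstarθ : ⟪θstar, θ⟫ = m := by rw [real_inner_comm, ← hm]
  have hvθ : ⟪v, θ⟫ = 0 := by
    rw [hv_def, inner_sub_left, real_inner_smul_left, hθθ, hstarθ]; ring
  have hθv : ⟪θ, v⟫ = 0 := by rw [real_inner_comm]; exact hvθ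
  have hvnorm : ‖v‖ ^ 2 = 1 - m ^ 2 := by
    rw [← real_inner_self_eq_norm_sq, hv_def]
    rw [inner_sub_left, inner_sub_right, inner_sub_right, real_inner_smul_left,
      real_inner_smul_left, real_inner_smul_right, real_inner_smul_right, hθθ, hstarθ,
      real_inner_comm θstar θ, hstarθ, real_inner_self_eq_norm_sq, hθstar]
    ring
  have hθstar_eq : θstar = m • θ + v := by rw [hv_def]; abel
  -- g = f ∘ clamp
  set g : ℝ → ℝ := fun t => f (clamp1 t) with hg_def
  have hfc : ContinuousOn f (Set.Icc (-1:ℝ) 1) :=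
    fun x hx => (hderiv x hx).continuousAt.continuousWithinAt
  have hgcont : Continuous g := hfc.comp_continuous clamp1_cont clamp1_mem
  have hgbd : ∀ t, |g t| ≤ 1 := by
    intro t
    have := hfmap _ (clamp1_mem t)
    rw [abs_le]; exact ⟨this.1, this.2⟩
  have hgeq : ∀ t ∈ Set.Icc (-1:ℝ) 1, g t = f t := fun t ht => by rw [hg_def]; simp [clamp1_eq ht]
  have hsIcc' : s ∈ Set.Icc (-1:ℝ) 1 := ⟨by linarith, hs1⟩
  have hfsbd : |f s| ≤ 1 := by
    have := hfmap s hsIcc'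
    rw [abs_le]; exact ⟨this.1, this.2⟩
  -- a.e. properties of Z
  have hZae : ∀ᵐ ω ∂μ, ‖Z ω‖ = 1 ∧ ⟪Z ω, θ⟫ = 0 :=
    ae_of_ae_map hZ.aemeasurable hν_supp
  -- T and measurability
  set T : Ω → ℝ := fun ω => ⟪v, Z ω⟫ with hT_def
  have hinner_cont : ∀ w : EVec d, Continuous (fun z : EVec d => ⟪w, z⟫) :=
    fun w => continuous_const.inner continuous_id
  have hT_meas : Measurable T := (hinner_cont v).measurable.comp hZ
  -- norm of s θ ± σ z
  have hnorm_pm : ∀ z : EVec d, ‖z‖ = 1 → ⟪z, θ⟫ = 0 → ∀ c : ℝ, c = σ ∨ c = -σ →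
      ‖s • θ + c • z‖ = 1 := by
    intro z hz1 hz2 c hc
    have hcsq : c ^ 2 = σ ^ 2 := by rcases hc with rfl | rfl <;> ring
    have hθz : ⟪θ, z⟫ = 0 := by rw [real_inner_comm]; exact hz2
    have : ‖s • θ + c • z‖ ^ 2 = 1 := by
      rw [norm_add_sq_real, real_inner_smul_left, real_inner_smul_right, hθz,
        norm_smul, norm_smul, hθ, hz1]
      simp only [Real.norm_eq_abs, mul_one, mul_zero]
      nlinarith [hs2, hcsq, sq_abs s, sq_abs c]
    nlinarith [norm_nonneg (s • θ + c • z), this]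
  -- inner products with θstar
  have hstar_inner : ∀ z : EVec d, ⟪z, θ⟫ = 0 → ⟪θstar, z⟫ = ⟪v, z⟫ := by
    intro z hz2
    have hθz : ⟪θ, z⟫ = 0 := by rw [real_inner_comm]; exact hz2
    rw [hθstar_eq, inner_add_left, real_inner_smul_left, hθz]; ring
  -- a.e. bounds on s*m ± σ*T
  have hbd_ae : ∀ z : EVec d, ‖z‖ = 1 → ⟪z, θ⟫ = 0 →
      |s * m + σ * ⟪v, z⟫| ≤ 1 ∧ |s * m - σ * ⟪v, z⟫| ≤ 1 := by
    intro z hz1 hz2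
    have key : ∀ c : ℝ, c = σ ∨ c = -σ → |s * m + c * ⟪v, z⟫| ≤ 1 := by
      intro c hc
      have heq : ⟪θstar, s • θ + c • z⟫ = s * m + c * ⟪v, z⟫ := by
        rw [inner_add_right, real_inner_smul_right, real_inner_smul_right, hstarθ,
          hstar_inner z hz2]
      calc |s * m + c * ⟪v, z⟫| = |⟪θstar, s • θ + c • z⟫| := by rw [heq]
      _ ≤ ‖θstar‖ * ‖s • θ + c • z‖ := abs_real_inner_le_norm _ _
      _ = 1 := by rw [hθstar, hnorm_pm z hz1 hz2 c hc, mul_one]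
    constructor
    · exact key σ (Or.inl rfl)
    · have := key (-σ) (Or.inr rfl)
      convert this using 2
      ring
  -- the nice representative F
  set F : Ω → ℝ := fun ω =>
    m + (η * f' s * σ) * ((g (s * m + σ * T ω) - f s) * T ω)
      + (η * f' s * σ) * (noise ω * T ω) with hF_def
  have hFeq : ∀ᵐ ω ∂μ, ⟪θstar, θhalf ω⟫ = F ω := by
    filter_upwards [hZae] with ω hω
    obtain ⟨hz1, hz2⟩ := hω
    have hθz : ⟪θ, Z ω⟫ = 0 := by rw [real_inner_comm]; exact hz2
    have hθA : ⟪θ, A ω⟫ = s := by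
      rw [hA ω, inner_add_right, real_inner_smul_right, real_inner_smul_right, hθθ, hθz]; ring
    have hw : A ω - ⟪θ, A ω⟫ • θ = σ • Z ω := by
      rw [hθA, hA ω]; abel
    have hstarA : ⟪θstar, A ω⟫ = s * m + σ * T ω := by
      rw [hA ω, inner_add_right, real_inner_smul_right, real_inner_smul_right, hstarθ,
        hstar_inner (Z ω) hz2, hT_def]
    have hbd := (hbd_ae (Z ω) hz1 hz2).1
    have hIcc : s * m + σ * T ω ∈ Set.Icc (-1:ℝ) 1 := abs_le.mp hbd
    have hgf : g (s * m + σ * T ω) = f (s * m + σ * T ω) := hgeq _ hIcc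
    have hstarZ : ⟪θstar, Z ω⟫ = T ω := hstar_inner (Z ω) hz2
    rw [hθhalf ω, inner_sub_right, real_inner_smul_right, hw, real_inner_smul_right,
      hstarθ, hstarZ, hθA, hstarA, hF_def]
    simp only
    rw [hgf]
    ring
  -- integrability pieces
  have hTbd : ∀ᵐ ω ∂μ, |T ω| ≤ ‖v‖ := by
    filter_upwards [hZae] with ω hω
    calc |T ω| ≤ ‖v‖ * ‖Z ω‖ := abs_real_inner_le_norm v (Z ω)
    _ = ‖v‖ := by rw [hω.1, mul_one]
  have hX_int : Integrable (fun ω => (g (s * m + σ * T ω) - f s) * T ω) μ := by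
    have hmeas : AEStronglyMeasurable (fun ω => (g (s * m + σ * T ω) - f s) * T ω) μ := by
      apply Measurable.aestronglyMeasurable
      exact (((hgcont.measurable.comp ((measurable_const.add
        (hT_meas.const_mul σ)))).sub measurable_const).mul hT_meas)
    refine Integrable.mono' (integrable_const (2 * ‖v‖)) hmeas ?_
    filter_upwards [hTbd] with ω hω
    rw [Real.norm_eq_abs, abs_mul]
    have h1 : |g (s * m + σ * T ω) - f s| ≤ 2 := by
      calc |g (s * m + σ * T ω) - f s| ≤ |g (s * m + σ * T ω)| + |f s| := abs_sub _ _
      _ ≤ 1 + 1 := add_le_add (hgbd _) hfsbd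
      _ = 2 := by norm_num
    exact mul_le_mul h1 hω (abs_nonneg _) (by norm_num)
  have hY_int : Integrable (fun ω => noise ω * T ω) μ := by
    have hmeas : AEStronglyMeasurable (fun ω => noise ω * T ω) μ :=
      (hnoise_meas.mul hT_meas).aestronglyMeasurable
    refine Integrable.mono' (hnoise_int.abs.const_mul ‖v‖) hmeas ?_
    filter_upwards [hTbd] with ω hω
    rw [Real.norm_eq_abs, abs_mul]
    have : |noise ω| * |T ω| ≤ |noise ω| * ‖v‖ := mul_le_mul_of_nonneg_left hω (abs_nonneg _)
    linarith
  have hT_int : Integrable T μ := by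
    refine Integrable.mono' (integrable_const ‖v‖) hT_meas.aestronglyMeasurable ?_
    filter_upwards [hTbd] with ω hω
    rwa [Real.norm_eq_abs]
  -- independence: E[noise * T] = 0
  have hYzero : ∫ ω, noise ω * T ω ∂μ = 0 := by
    have hind2 : IndepFun noise T μ := by
      have := hindep.comp measurable_id (hinner_cont v).measurable
      exact this
    have h0 := hind2.integral_mul_eq_mul_integral hnoise_int.aestronglyMeasurable hT_int.aestronglyMeasurable
    simp only [hnoise_mean, zero_mul] at h0
    exact h0
  -- split the integral
  have hint_eq : ∫ ω, ⟪θstar, θhalf ω⟫ ∂μ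
      = m + (η * f' s * σ) * ∫ ω, (g (s * m + σ * T ω) - f s) * T ω ∂μ := by
    have hfab : Integrable (fun ω => m
        + (η * f' s * σ) * ((g (s * m + σ * T ω) - f s) * T ω)) μ :=
      (integrable_const m).add (hX_int.const_mul _)
    have hgab : Integrable (fun ω => (η * f' s * σ) * (noise ω * T ω)) μ :=
      hY_int.const_mul _
    rw [integral_congr_ae hFeq, hF_def]
    rw [integral_add hfab hgab, integral_add (integrable_const m) (hX_int.const_mul _),
      integral_const, integral_const_mul, integral_const_mul, hYzero]
    simp [measure_univ]
  -- lower bound the main integral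
  set I := (∫ ω, (g (s * m + σ * T ω) - f s) * T ω ∂μ) with hI_def
  have hslope := slope_lb f f' hderiv c₀ hc₀f
  by_cases hv0 : v = 0
  · -- degenerate case: m = 1
    have hm2' : 1 - m ^ 2 = 0 := by rw [← hvnorm, hv0]; simp
    have hI0 : I = 0 := by
      rw [hI_def]
      have : ∀ ω, (g (s * m + σ * T ω) - f s) * T ω = 0 := by
        intro ω; simp [hT_def, hv0]
      simp [this]
    rw [hint_eq, hI0, hm2']
    simp
  · -- main case
    set ν : Measure (EVec d) := μ.map Z with hν_def
    haveI : IsProbabilityMeasure ν := hν_prob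
    set u : EVec d := ‖v‖⁻¹ • v with hu_def
    have hvne : ‖v‖ ≠ 0 := fun h => hv0 (norm_eq_zero.mp h)
    have hvpos : 0 < ‖v‖ := lt_of_le_of_ne (norm_nonneg v) (Ne.symm hvne)
    have hu1 : ‖u‖ = 1 := by
      rw [hu_def, norm_smul, norm_inv, norm_norm, inv_mul_cancel₀ hvne]
    have huθ : ⟪u, θ⟫ = 0 := by
      rw [hu_def, real_inner_smul_left, hvθ, mul_zero]
    have hvu : v = ‖v‖ • u := by
      rw [hu_def, smul_smul, mul_inv_cancel₀ hvne, one_smul]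
    obtain ⟨R, hRθ, hRmu⟩ := exchange hd2 θ u (-u) hθ hu1 (by rw [norm_neg]; exact hu1)
      huθ (by rw [inner_neg_left, huθ, neg_zero])
    have hRsymm : R.symm v = -v := by
      have h1 := congrArg R.symm hRmu
      rw [LinearIsometryEquiv.symm_apply_apply] at h1
      rw [hvu, _root_.map_smul, ← h1, smul_neg]
    have hflip : ∀ z : EVec d, ⟪v, R z⟫ = -⟪v, z⟫ := by
      intro z
      have := R.inner_map_map (R.symm v) z
      rw [R.apply_symm_apply] at this
      rw [this, hRsymm, inner_neg_left]
    -- the functions on the sphere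
    set h1f : EVec d → ℝ := fun z => (g (s * m + σ * ⟪v, z⟫) - f s) * ⟪v, z⟫ with hh1_def
    set h2f : EVec d → ℝ := fun z => (g (s * m - σ * ⟪v, z⟫) - f s) * (-⟪v, z⟫) with hh2_def
    have hh1c : Continuous h1f := by
      apply Continuous.mul
      · exact (hgcont.comp (continuous_const.add (continuous_const.mul (hinner_cont v)))).sub
          continuous_const
      · exact hinner_cont v
    have hh2c : Continuous h2f := by
      apply Continuous.mul
      · exact (hgcont.comp (continuous_const.sub (continuous_const.mul (hinner_cont v)))).sub
          continuous_const
      · exact (hinner_cont v).neg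
    have hsupp' : ∀ᵐ z ∂ν, ‖z‖ = 1 ∧ ⟪z, θ⟫ = 0 := hν_supp
    have hbdd_inner : ∀ᵐ z ∂ν, |⟪v, z⟫| ≤ ‖v‖ := by
      filter_upwards [hsupp'] with z hz
      calc |⟪v, z⟫| ≤ ‖v‖ * ‖z‖ := abs_real_inner_le_norm v z
      _ = ‖v‖ := by rw [hz.1, mul_one]
    have hint_h1 : Integrable h1f ν := by
      refine int_bdd ν h1f hh1c (2 * ‖v‖) ?_
      filter_upwards [hbdd_inner] with z hz
      rw [hh1_def]
      simp only
      rw [abs_mul]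
      have : |g (s * m + σ * ⟪v, z⟫) - f s| ≤ 2 := by
        calc |g (s * m + σ * ⟪v, z⟫) - f s| ≤ |g (s * m + σ * ⟪v, z⟫)| + |f s| := abs_sub _ _
        _ ≤ 1 + 1 := add_le_add (hgbd _) hfsbd
        _ = 2 := by norm_num
      exact mul_le_mul this hz (abs_nonneg _) (by norm_num)
    have hint_h2 : Integrable h2f ν := by
      refine int_bdd ν h2f hh2c (2 * ‖v‖) ?_
      filter_upwards [hbdd_inner] with z hz
      rw [hh2_def]
      simp only
      rw [abs_mul, abs_neg]
      have : |g (s * m - σ * ⟪v, z⟫) - f s| ≤ 2 := by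
        calc |g (s * m - σ * ⟪v, z⟫) - f s| ≤ |g (s * m - σ * ⟪v, z⟫)| + |f s| := abs_sub _ _
        _ ≤ 1 + 1 := add_le_add (hgbd _) hfsbd
        _ = 2 := by norm_num
      exact mul_le_mul this hz (abs_nonneg _) (by norm_num)
    have hint_sq : Integrable (fun z => ⟪v, z⟫ ^ 2) ν := by
      refine int_bdd ν _ (cont_inner_sq v) (‖v‖ ^ 2) ?_
      filter_upwards [hbdd_inner] with z hz
      rw [abs_of_nonneg (sq_nonneg _)]
      calc ⟪v, z⟫ ^ 2 = |⟪v, z⟫| ^ 2 := (sq_abs _).symm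
      _ ≤ ‖v‖ ^ 2 := pow_le_pow_left₀ (abs_nonneg _) hz 2
    -- I as an integral over ν
    have hI_nu : I = ∫ z, h1f z ∂ν := by
      rw [hI_def, hν_def, integral_map hZ.aemeasurable hh1c.aestronglyMeasurable]
    -- symmetry
    have hsym : ∫ z, h1f z ∂ν = ∫ z, h2f z ∂ν := by
      rw [map_int ν R (hν_inv R hRθ) h1f hh1c]
      congr 1
      ext z
      rw [hh1_def, hh2_def]
      simp only [hflip z]
      ring_nf
    -- a.e. lower bound
    have hae_lb : ∀ᵐ z ∂ν, c₀ * σ * ⟪v, z⟫ ^ 2 ≤ h1f z + h2f z := by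
      filter_upwards [hsupp'] with z hz
      obtain ⟨hbd1, hbd2⟩ := hbd_ae z hz.1 hz.2
      have hsm0 : 0 ≤ s * m := mul_nonneg hs0 (le_of_lt hm0)
      have hIcc1 : s * m + σ * ⟪v, z⟫ ∈ Set.Icc (-1:ℝ) 1 := abs_le.mp hbd1
      have hIcc2 : s * m - σ * ⟪v, z⟫ ∈ Set.Icc (-1:ℝ) 1 := abs_le.mp hbd2
      have hkey := pointwise_ineq f hfmono c₀ σ (s * m) hslope hσ0 hsm0 ⟪v, z⟫ hbd1 hbd2
      rw [hh1_def, hh2_def]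
      simp only
      rw [hgeq _ hIcc1, hgeq _ hIcc2]
      calc c₀ * σ * ⟪v, z⟫ ^ 2
          ≤ (f (s * m + σ * ⟪v, z⟫) - f (s * m - σ * ⟪v, z⟫)) * ⟪v, z⟫ := hkey
      _ = (f (s * m + σ * ⟪v, z⟫) - f s) * ⟪v, z⟫
          + (f (s * m - σ * ⟪v, z⟫) - f s) * (-⟪v, z⟫) := by ring
    -- integrate the lower bound
    have h2I : c₀ * σ * ∫ z, ⟪v, z⟫ ^ 2 ∂ν ≤ I + I := by
      have hle : ∫ z, c₀ * σ * ⟪v, z⟫ ^ 2 ∂ν ≤ ∫ z, (h1f z + h2f z) ∂ν :=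
        integral_mono_ae (hint_sq.const_mul _) (hint_h1.add hint_h2) hae_lb
      rw [integral_const_mul] at hle
      rw [integral_add hint_h1 hint_h2] at hle
      rw [hI_nu]
      calc c₀ * σ * ∫ z, ⟪v, z⟫ ^ 2 ∂ν ≤ (∫ z, h1f z ∂ν) + ∫ z, h2f z ∂ν := hle
      _ = (∫ z, h1f z ∂ν) + ∫ z, h1f z ∂ν := by rw [← hsym]
    -- second moment
    have hsq_val : ∫ z, ⟪v, z⟫ ^ 2 ∂ν = (1 - m ^ 2) / ((d:ℝ) - 1) := by
      have hrw : ∀ z : EVec d, ⟪v, z⟫ ^ 2 = ‖v‖ ^ 2 * ⟪u, z⟫ ^ 2 := by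
        intro z
        conv_lhs => rw [hvu, real_inner_smul_left]
        ring
      simp only [hrw]
      rw [integral_const_mul, second_moment hd θ hθ ν hsupp' hν_inv u hu1 huθ, hvnorm]
      ring
    rw [hsq_val] at h2I
    -- final arithmetic
    rw [hint_eq]
    have hd3 : (3:ℝ) ≤ (d:ℝ) := by exact_mod_cast hd
    have hd1pos : (0:ℝ) < (d:ℝ) - 1 := by linarith
    have hdpos : (0:ℝ) < (d:ℝ) := by linarith
    have hIlb : c₀ * σ * ((1 - m ^ 2) / ((d:ℝ) - 1)) / 2 ≤ I := by linarith
    have hcoef : (0:ℝ) ≤ η * f' s * σ :=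
      mul_nonneg (mul_nonneg (le_of_lt hη) (le_of_lt hfs0)) hσ0
    have key : (η * f' s * σ) * (c₀ * σ * ((1 - m ^ 2) / ((d:ℝ) - 1)) / 2)
        ≤ (η * f' s * σ) * I := mul_le_mul_of_nonneg_left hIlb hcoef
    have hfrac : (1 - m ^ 2) / (d:ℝ) ≤ (1 - m ^ 2) / ((d:ℝ) - 1) := by
      apply div_le_div_of_nonneg_left hm2 hd1pos (by linarith)
    have hcc : (0:ℝ) ≤ 1/2 * c₀ * η * σ ^ 2 * f' s :=
      mul_nonneg (mul_nonneg (mul_nonneg (mul_nonneg (by norm_num) (le_of_lt hc₀))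
        (le_of_lt hη)) (sq_nonneg σ)) (le_of_lt hfs0)
    have step : 1/2 * c₀ * η * σ ^ 2 * f' s * ((1 - m ^ 2) / (d:ℝ))
        ≤ 1/2 * c₀ * η * σ ^ 2 * f' s * ((1 - m ^ 2) / ((d:ℝ) - 1)) :=
      mul_le_mul_of_nonneg_left hfrac hcc
    have lhs_eq : 1/2 * c₀ * (η * σ ^ 2 / (d:ℝ)) * f' s * (1 - m ^ 2)
        = 1/2 * c₀ * η * σ ^ 2 * f' s * ((1 - m ^ 2) / (d:ℝ)) := by ring
    have rhs_eq : (η * f' s * σ) * (c₀ * σ * ((1 - m ^ 2) / ((d:ℝ) - 1)) / 2)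
        = 1/2 * c₀ * η * σ ^ 2 * f' s * ((1 - m ^ 2) / ((d:ℝ) - 1)) := by ring
    linarith
end
end

section
/- Initialization cost is dominated by the burn-in integral: let d ≥ 1 and let f : [0,1] → ℝ be non-decreasing and continuously differentiable with f'(m) > 0 for all m ∈ [1/(2√d), 1/√d]. Then 1 / ( f(1/√d) − f(0) )² ≤ 16 d² ∫_{1/(2√d)}^{1/√d} ( m / f'(m)² ) dm. -/
open MeasureTheory Real

noncomputable section


lemma cs_aux {α : Type*} {mα : MeasurableSpace α} (μ : Measure α) {g h : α → ℝ}
    (hg : MemLp g 2 μ) (hh : MemLp h 2 μ) (hg0 : 0 ≤ᵐ[μ] g) (hh0 : 0 ≤ᵐ[μ] h) :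
    (∫ x, g x * h x ∂μ) ^ 2 ≤ (∫ x, g x ^ 2 ∂μ) * (∫ x, h x ^ 2 ∂μ) := by
  have hpq : Real.HolderConjugate 2 2 := Real.holderConjugate_iff.mpr ⟨one_lt_two, by norm_num⟩
  have h2 : (ENNReal.ofReal (2 : ℝ)) = 2 := by norm_num
  have H := MeasureTheory.integral_mul_le_Lp_mul_Lq_of_nonneg hpq hg0 hh0
      (by rwa [h2]) (by rwa [h2])
  simp only [show ∀ x : ℝ, x ^ (2:ℝ) = x ^ 2 from fun x => by
    rw [← Real.rpow_natCast x 2]; norm_num] at H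
  have hA : 0 ≤ ∫ x, g x ^ 2 ∂μ := integral_nonneg fun x => sq_nonneg _
  have hB : 0 ≤ ∫ x, h x ^ 2 ∂μ := integral_nonneg fun x => sq_nonneg _
  have h0 : 0 ≤ ∫ x, g x * h x ∂μ := by
    refine integral_nonneg_of_ae ?_
    filter_upwards [hg0, hh0] with x h1 h2 using mul_nonneg h1 h2
  calc (∫ x, g x * h x ∂μ) ^ 2
      ≤ ((∫ x, g x ^ 2 ∂μ) ^ (1/2:ℝ) * (∫ x, h x ^ 2 ∂μ) ^ (1/2:ℝ)) ^ 2 :=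
        pow_le_pow_left₀ h0 H 2
    _ = (∫ x, g x ^ 2 ∂μ) * (∫ x, h x ^ 2 ∂μ) := by
        rw [mul_pow, ← Real.rpow_natCast ((∫ x, g x ^ 2 ∂μ) ^ (1/2:ℝ)) 2,
          ← Real.rpow_natCast ((∫ x, h x ^ 2 ∂μ) ^ (1/2:ℝ)) 2,
          ← Real.rpow_mul hA, ← Real.rpow_mul hB]
        norm_num

lemma memLp_aux {g : ℝ → ℝ} {a b : ℝ} (h : ContinuousOn g (Set.Icc a b)) :
    MemLp g 2 (volume.restrict (Set.Ioc a b)) := by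
  have hfin : IsFiniteMeasure (volume.restrict (Set.Ioc a b)) := by
    constructor
    rw [Measure.restrict_apply_univ, Real.volume_Ioc]
    exact ENNReal.ofReal_lt_top
  obtain ⟨C, hC⟩ := (isCompact_Icc).exists_bound_of_continuousOn h
  refine MemLp.of_bound ?_ C ?_
  · exact (h.mono Set.Ioc_subset_Icc_self).aestronglyMeasurable measurableSet_Ioc
  · filter_upwards [ae_restrict_mem measurableSet_Ioc] with x hx
    exact hC x (Set.Ioc_subset_Icc_self hx)

/-- Initialization cost is dominated by the burn-in integral: for `d ≥ 1` and
`f : [0,1] → ℝ` non-decreasing, continuously differentiable, with `f' > 0` on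
`[1/(2√d), 1/√d]`, one has
`1/(f(1/√d) − f(0))² ≤ 16 d² ∫_{1/(2√d)}^{1/√d} m / f'(m)² dm`. -/
theorem statement18 (d : ℕ) (hd : 1 ≤ d) (f f' : ℝ → ℝ)
    (hmono : MonotoneOn f (Set.Icc (0 : ℝ) 1))
    (hderiv : ∀ x ∈ Set.Icc (0 : ℝ) 1, HasDerivAt f (f' x) x)
    (hcont : ContinuousOn f' (Set.Icc (0 : ℝ) 1))
    (hpos : ∀ m ∈ Set.Icc (1 / (2 * Real.sqrt d)) (1 / Real.sqrt d), 0 < f' m) :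
    1 / (f (1 / Real.sqrt d) - f 0) ^ 2 ≤
      16 * (d : ℝ) ^ 2 *
        ∫ m in (1 / (2 * Real.sqrt d))..(1 / Real.sqrt d), m / f' m ^ 2 := by
  set s := Real.sqrt d with hs_def
  have hs1 : (1:ℝ) ≤ s := by
    rw [hs_def, show (1:ℝ) = Real.sqrt 1 by simp]
    exact Real.sqrt_le_sqrt (by exact_mod_cast hd)
  have hs0 : (0:ℝ) < s := lt_of_lt_of_le one_pos hs1
  have hsq : s ^ 2 = (d:ℝ) := Real.sq_sqrt (by positivity)
  set a := 1 / (2 * s) with ha_def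
  set b := 1 / s with hb_def
  have ha0 : 0 < a := by positivity
  have hab : a < b := by
    rw [ha_def, hb_def]
    exact one_div_lt_one_div_of_lt hs0 (by linarith)
  have hb1 : b ≤ 1 := by rw [hb_def, div_le_one hs0]; exact hs1
  have hba : b - a = a := by rw [ha_def, hb_def]; field_simp; ring
  have hsub : Set.Icc a b ⊆ Set.Icc (0:ℝ) 1 := Set.Icc_subset_Icc ha0.le hb1
  have hcont' : ContinuousOn f' (Set.Icc a b) := hcont.mono hsub
  have hposIoc : ∀ x ∈ Set.Ioc a b, 0 < f' x := fun x hx =>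
    hpos x (Set.Ioc_subset_Icc_self hx)
  have hint : IntervalIntegrable f' volume a b := by
    apply ContinuousOn.intervalIntegrable
    rwa [Set.uIcc_of_le hab.le]
  -- FTC
  set I1 := ∫ x in a..b, f' x with hI1_def
  have hI1 : I1 = f b - f a := by
    rw [hI1_def]
    exact intervalIntegral.integral_eq_sub_of_hasDerivAt
      (fun x hx => hderiv x (hsub (by rwa [Set.uIcc_of_le hab.le] at hx))) hint
  have hI1pos : 0 < I1 :=
    intervalIntegral.intervalIntegral_pos_of_pos_on hint
      (fun x hx => hpos x (Set.Ioo_subset_Icc_self hx)) hab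
  -- basic integrals over the restricted measure
  set μ := volume.restrict (Set.Ioc a b) with hμ_def
  have hμIoc : ∀ᵐ x ∂μ, x ∈ Set.Ioc a b := ae_restrict_mem measurableSet_Ioc
  set I2 := ∫ x in a..b, (f' x)⁻¹ with hI2_def
  set I3 := ∫ x in a..b, ((f' x) ^ 2)⁻¹ with hI3_def
  have hcinv : ContinuousOn (fun x => (f' x)⁻¹) (Set.Icc a b) :=
    hcont'.inv₀ (fun x hx => (hpos x hx).ne')
  have hcinv2 : ContinuousOn (fun x => ((f' x) ^ 2)⁻¹) (Set.Icc a b) :=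
    (hcont'.pow 2).inv₀ (fun x hx => (pow_pos (hpos x hx) 2).ne')
  -- CS 1 : (b-a)^2 ≤ I1 * I2
  have csone : (b - a) ^ 2 ≤ I1 * I2 := by
    have hg : MemLp (fun x => Real.sqrt (f' x)) 2 μ :=
      memLp_aux (Real.continuous_sqrt.comp_continuousOn hcont')
    have hh : MemLp (fun x => Real.sqrt ((f' x)⁻¹)) 2 μ :=
      memLp_aux (Real.continuous_sqrt.comp_continuousOn hcinv)
    have H := cs_aux μ hg hh
      (Filter.Eventually.of_forall fun x => Real.sqrt_nonneg _)
      (Filter.Eventually.of_forall fun x => Real.sqrt_nonneg _)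
    have e1 : ∫ x, Real.sqrt (f' x) * Real.sqrt ((f' x)⁻¹) ∂μ = b - a := by
      rw [show (∫ x, Real.sqrt (f' x) * Real.sqrt ((f' x)⁻¹) ∂μ)
          = ∫ x, (1:ℝ) ∂μ from ?_]
      · simp [hμ_def, Real.volume_Ioc, ENNReal.toReal_ofReal (by linarith : (0:ℝ) ≤ b - a), hab.le]
      · refine integral_congr_ae ?_
        filter_upwards [hμIoc] with x hx
        have h0 := hposIoc x hx
        rw [← Real.sqrt_mul h0.le, mul_inv_cancel₀ h0.ne', Real.sqrt_one]
    have e2 : ∫ x, (Real.sqrt (f' x)) ^ 2 ∂μ = I1 := by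
      rw [hI1_def, intervalIntegral.integral_of_le hab.le]
      refine integral_congr_ae ?_
      filter_upwards [hμIoc] with x hx
      exact Real.sq_sqrt (hposIoc x hx).le
    have e3 : ∫ x, (Real.sqrt ((f' x)⁻¹)) ^ 2 ∂μ = I2 := by
      rw [hI2_def, intervalIntegral.integral_of_le hab.le]
      refine integral_congr_ae ?_
      filter_upwards [hμIoc] with x hx
      exact Real.sq_sqrt (inv_nonneg.mpr (hposIoc x hx).le)
    rw [e1, e2, e3] at H
    exact H
  -- CS 2 : I2^2 ≤ (b-a) * I3
  have cstwo : I2 ^ 2 ≤ (b - a) * I3 := by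
    have hg : MemLp (fun _ : ℝ => (1:ℝ)) 2 μ := memLp_aux continuousOn_const
    have hh : MemLp (fun x => (f' x)⁻¹) 2 μ := memLp_aux hcinv
    have H := cs_aux μ hg hh
      (Filter.Eventually.of_forall fun x => zero_le_one)
      (by filter_upwards [hμIoc] with x hx
          exact inv_nonneg.mpr (hposIoc x hx).le)
    have e1 : ∫ x, (1:ℝ) * (f' x)⁻¹ ∂μ = I2 := by
      rw [hI2_def, intervalIntegral.integral_of_le hab.le]
      simp [hμ_def]
    have e2 : ∫ x, (1:ℝ) ^ 2 ∂μ = b - a := by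
      simp [hμ_def, Real.volume_Ioc, ENNReal.toReal_ofReal (by linarith : (0:ℝ) ≤ b - a), hab.le]
    have e3 : ∫ x, ((f' x)⁻¹) ^ 2 ∂μ = I3 := by
      rw [hI3_def, intervalIntegral.integral_of_le hab.le]
      refine integral_congr_ae (Filter.Eventually.of_forall fun x => ?_)
      simp [inv_pow]
    rw [e1, e2, e3] at H
    exact H
  -- comparison with the target integral
  set J := ∫ m in a..b, m / f' m ^ 2 with hJ_def
  have hJ : a * I3 ≤ J := by
    rw [hI3_def, hJ_def, ← intervalIntegral.integral_const_mul]
    refine intervalIntegral.integral_mono_on hab.le ?_ ?_ ?_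
    · exact ContinuousOn.intervalIntegrable
        (by rw [Set.uIcc_of_le hab.le]; exact continuousOn_const.mul hcinv2)
    · exact ContinuousOn.intervalIntegrable
        (by rw [Set.uIcc_of_le hab.le]
            exact continuousOn_id.div (hcont'.pow 2)
              (fun x hx => (pow_pos (hpos x hx) 2).ne'))
    · intro x hx
      have hfx := hpos x hx
      rw [div_eq_mul_inv]
      exact mul_le_mul_of_nonneg_right hx.1 (by positivity)
  have hI2nn : 0 ≤ I2 := by
    rw [hI2_def, intervalIntegral.integral_of_le hab.le]
    refine integral_nonneg_of_ae ?_
    filter_upwards [hμIoc] with x hx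
    exact inv_nonneg.mpr (hposIoc x hx).le
  have hI3nn : 0 ≤ I3 := by
    rw [hI3_def, intervalIntegral.integral_of_le hab.le]
    exact integral_nonneg_of_ae (Filter.Eventually.of_forall fun x => by positivity)
  -- a^4 ≤ I1^2 * J
  rw [hba] at csone cstwo
  have key : a ^ 4 ≤ I1 ^ 2 * J := by
    nlinarith [mul_le_mul csone csone (by positivity) (le_trans (by positivity) csone),
      mul_le_mul_of_nonneg_left cstwo (sq_nonneg I1),
      mul_le_mul_of_nonneg_left hJ (sq_nonneg I1), sq_nonneg I1, sq_nonneg a]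
  have ha4 : 16 * (d:ℝ) ^ 2 * a ^ 4 = 1 := by
    rw [ha_def, ← hsq]; field_simp; ring
  -- difference of f-values dominates I1
  have hD : I1 ≤ f b - f 0 := by
    rw [hI1]
    have := hmono (Set.mem_Icc.mpr ⟨le_refl 0, zero_le_one⟩)
      (hsub (Set.mem_Icc.mpr ⟨le_refl a, hab.le⟩)) ha0.le
    linarith
  have hDpos : 0 < f b - f 0 := lt_of_lt_of_le hI1pos hD
  have step1 : 1 / (f b - f 0) ^ 2 ≤ 1 / I1 ^ 2 := by
    apply one_div_le_one_div_of_le (by positivity)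
    exact pow_le_pow_left₀ hI1pos.le hD 2
  have step2 : 1 / I1 ^ 2 ≤ 16 * (d:ℝ) ^ 2 * J := by
    rw [div_le_iff₀ (by positivity)]
    nlinarith [mul_le_mul_of_nonneg_left key (by positivity : (0:ℝ) ≤ 16 * (d:ℝ)^2)]
  exact le_trans step1 step2
end
end

section
/- Monotone link functions have information exponent one: let f : ℝ → ℝ be a non-decreasing function and let Z ~ N(0,1) be a standard Gaussian random variable such that f(Z) and Z f(Z) are integrable. Then E[ f(Z) Z ] ≥ 0, and E[ f(Z) Z ] = 0 if and only if f is constant Lebesgue-almost everywhere. -/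
open MeasureTheory ProbabilityTheory Real

noncomputable section

lemma integrable_id_gauss : Integrable (fun x : ℝ => x) (gaussianReal 0 1) := by
  rw [gaussianReal_of_var_ne_zero 0 one_ne_zero, gaussianPDF_def,
    integrable_withDensity_iff (measurable_gaussianPDFReal 0 1).ennreal_ofReal
      (Filter.Eventually.of_forall fun x => ENNReal.ofReal_lt_top)]
  have h := integrable_rpow_mul_exp_neg_mul_sq (b := (2:ℝ)⁻¹) (by norm_num) (s := 1)
    (by norm_num)
  simp only [Real.rpow_one] at h
  have h2 := h.const_mul ((Real.sqrt (2 * π * (1:ℝ)))⁻¹)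
  refine h2.congr ?_
  refine Filter.Eventually.of_forall fun x => ?_
  show _ = x * (ENNReal.ofReal (gaussianPDFReal 0 1 x)).toReal
  rw [ENNReal.toReal_ofReal (gaussianPDFReal_nonneg 0 1 x), gaussianPDFReal]
  push_cast
  rw [show (-(x - 0) ^ 2 / (2 * (1 : ℝ)) : ℝ) = -2⁻¹ * x ^ 2 from by ring]
  ring

lemma integral_id_gauss : ∫ x, x ∂gaussianReal 0 1 = 0 := by
  have hmap : (gaussianReal 0 1).map (fun x : ℝ => (-1 : ℝ) * x) = gaussianReal 0 1 := by
    have h := gaussianReal_map_const_mul (μ := 0) (v := 1) (-1)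
    simpa using h.trans (by norm_num)
  have hsm : AEStronglyMeasurable (fun x : ℝ => x)
      ((gaussianReal 0 1).map (fun x : ℝ => (-1 : ℝ) * x)) := by
    rw [hmap]; exact aestronglyMeasurable_id
  have h1 : ∫ x, x ∂gaussianReal 0 1 = ∫ x, (-1 : ℝ) * x ∂gaussianReal 0 1 := by
    conv_lhs => rw [← hmap]
    exact integral_map ((measurable_const_mul (-1 : ℝ)).aemeasurable) hsm
  have h2 : ∫ x, (-1 : ℝ) * x ∂gaussianReal 0 1 = - ∫ x, x ∂gaussianReal 0 1 := by
    rw [show (fun x : ℝ => (-1 : ℝ) * x) = fun x : ℝ => -x from funext fun x => by ring,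
      integral_neg]
  linarith [h1, h2]

/-- Monotone link functions have information exponent one: for a
non-decreasing `f : ℝ → ℝ` with `f(Z)` and `Z f(Z)` integrable under `Z ~ N(0,1)`, the first
Hermite coefficient satisfies `E[f(Z) Z] ≥ 0`, with equality iff `f` is constant
Lebesgue-almost everywhere. -/
theorem statement19 (f : ℝ → ℝ) (hmono : Monotone f)
    (hint1 : Integrable f (gaussianReal 0 1))
    (hint2 : Integrable (fun x => f x * x) (gaussianReal 0 1)) :
    0 ≤ ∫ x, f x * x ∂gaussianReal 0 1 ∧
      ((∫ x, f x * x ∂gaussianReal 0 1) = 0 ↔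
        ∃ cst : ℝ, ∀ᵐ x ∂(volume : Measure ℝ), f x = cst) := by
  set μ := gaussianReal 0 1 with hμ
  set c := f 0 with hc
  have hg : ∀ x, 0 ≤ (f x - c) * x := by
    intro x
    rcases le_total 0 x with hx | hx
    · exact mul_nonneg (sub_nonneg.mpr (hmono hx)) hx
    · nlinarith [sub_nonpos.mpr (hmono hx)]
  have hgi : Integrable (fun x => (f x - c) * x) μ := by
    have heq : (fun x => (f x - c) * x) = fun x => f x * x - c * x := by
      funext x; ring
    rw [heq]
    exact hint2.sub (integrable_id_gauss.const_mul c)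
  have hsplit : ∫ x, f x * x ∂μ = ∫ x, (f x - c) * x ∂μ := by
    have heq : (fun x => (f x - c) * x) = fun x => f x * x - c * x := by
      funext x; ring
    rw [heq, integral_sub hint2 (integrable_id_gauss.const_mul c), integral_const_mul,
      integral_id_gauss, mul_zero, sub_zero]
  have hnonneg : 0 ≤ ∫ x, f x * x ∂μ := by
    rw [hsplit]
    exact integral_nonneg hg
  refine ⟨hnonneg, ?_, ?_⟩
  · -- forward
    intro h0
    rw [hsplit] at h0
    have hae : (fun x => (f x - c) * x) =ᵐ[μ] 0 :=
      (integral_eq_zero_iff_of_nonneg hg hgi).mp h0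
    have hvol : (fun x => (f x - c) * x) =ᵐ[volume] 0 :=
      hae.filter_mono (gaussianReal_absolutelyContinuous' 0 one_ne_zero).ae_le
    have hne : ∀ᵐ x ∂(volume : Measure ℝ), x ≠ 0 := by
      rw [ae_iff]
      have : {x : ℝ | ¬x ≠ 0} = {0} := by ext x; simp
      rw [this]
      exact Real.volume_singleton
    refine ⟨c, ?_⟩
    filter_upwards [hvol, hne] with x hx hx0
    have := mul_eq_zero.mp hx
    rcases this with h | h
    · linarith [sub_eq_zero.mp h]
    · exact absurd h hx0
  · -- backward
    rintro ⟨cst, hcst⟩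
    have hconst : ∀ x, f x = cst := by
      have hs : (volume : Measure ℝ) {y | f y ≠ cst} = 0 := by
        rw [ae_iff] at hcst; exact hcst
      have key : ∀ a b : ℝ, a < b → ∃ y ∈ Set.Ioo a b, f y = cst := by
        intro a b hab
        by_contra hcon
        push_neg at hcon
        have hsub : Set.Ioo a b ⊆ {y | f y ≠ cst} := fun y hy => hcon y hy
        have := measure_mono (μ := (volume : Measure ℝ)) hsub
        rw [hs, Real.volume_Ioo] at this
        simp only [nonpos_iff_eq_zero, ENNReal.ofReal_eq_zero] at this
        linarith
      intro x
      obtain ⟨y₂, hy₂, hfy₂⟩ := key x (x + 1) (by linarith)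
      obtain ⟨y₁, hy₁, hfy₁⟩ := key (x - 1) x (by linarith)
      have h1 : cst ≤ f x := hfy₁ ▸ hmono hy₁.2.le
      have h2 : f x ≤ cst := hfy₂ ▸ hmono hy₂.1.le
      linarith
    have : ∫ x, f x * x ∂μ = ∫ x, cst * x ∂μ := by
      congr 1; funext x; rw [hconst x]
    rw [this, integral_const_mul, integral_id_gauss, mul_zero]
end
end
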